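/- In the A_n^{(1)} crystal B(lΛ̄_k), the extremal element b_a with g,r determined by a = (n+1-k)g + r + 1 (so b_a = f_{k-g+r}^{max}b_{a-1} with b_0 the tableau m_{i,i'} = i) is the tableau with m_{i,i'} = i for i < k-g, m_{k-g,i'} = k-g+r+1, and m_{i,i'} = i+n+1-k for i > k-g, for all columns i'. -/

import Mathlib

/- The type A_n crystal B(lΛ̄_k): rectangular semistandard tableaux with k rows
and l columns, entries in {1,…,n+1}.  A tableau is encoded as a function
m : ℕ → ℕ → ℕ, where `m i c` is the entry in row `i`, column `c`
(rows 1..k, columns 1..l; `m i c = 0` outside this range).  Column `c = 1` is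
the rightmost tensor factor under the embedding
B(lΛ̄_k) ↪ B(Λ̄_k)^{⊗l}, (m_{i,i'}) ↦ (m^{(l)}) ⊗ ⋯ ⊗ (m^{(1)}). -/

namespace ATab

/-- semistandardness: entries in 1..n+1, rows weakly increasing, columns
strictly increasing, and `0` outside the `k × l` rectangle. -/
def isTab (n k l : ℕ) (m : ℕ → ℕ → ℕ) : Prop :=
  (∀ i c, 1 ≤ i → i ≤ k → 1 ≤ c → c ≤ l → 1 ≤ m i c ∧ m i c ≤ n + 1) ∧
  (∀ i c, 1 ≤ i → i ≤ k → 1 ≤ c → c < l → m i c ≤ m i (c + 1)) ∧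
  (∀ i c, 1 ≤ i → i < k → 1 ≤ c → c ≤ l → m i c < m (i + 1) c) ∧
  (∀ i c, i = 0 ∨ k < i ∨ c = 0 ∨ l < c → m i c = 0)

/-- column `c` contains the entry `j` -/
def colHas (k : ℕ) (m : ℕ → ℕ → ℕ) (c j : ℕ) : Prop :=
  ∃ i ∈ Finset.Icc 1 k, m i c = j

/-- column `c` contributes a `+` to the `j`-signature
(contains `j` but not `j+1`) -/
def colPlus (k : ℕ) (m : ℕ → ℕ → ℕ) (c j : ℕ) : Prop :=
  colHas k m c j ∧ ¬ colHas k m c (j + 1)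

/-- column `c` contributes a `−` to the `j`-signature
(contains `j+1` but not `j`) -/
def colMinus (k : ℕ) (m : ℕ → ℕ → ℕ) (c j : ℕ) : Prop :=
  colHas k m c (j + 1) ∧ ¬ colHas k m c j

open Classical in
/-- Signature-rule scan for `f_j`.  The columns are processed from the
rightmost tensor factor (column 1) towards the leftmost (column `c`),
maintaining the number of unmatched `−`'s, the number of unbracketed `+`'s
(which is `φ_j`), and the column of the leftmost unbracketed `+` (on which
`f_j` acts). -/
noncomputable def scan (k j : ℕ) (m : ℕ → ℕ → ℕ) : ℕ → ℕ × ℕ × Option ℕ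
  | 0 => (0, 0, none)
  | c + 1 =>
    let s := scan k j m c
    if colMinus k m (c + 1) j then (s.1 + 1, s.2.1, s.2.2)
    else if colPlus k m (c + 1) j then
      (if s.1 = 0 then (0, s.2.1 + 1, some (c + 1)) else (s.1 - 1, s.2.1, s.2.2))
    else s

/-- `φ_j` of a tableau: the number of unbracketed `+`'s in the `j`-signature -/
noncomputable def phi (k l j : ℕ) (m : ℕ → ℕ → ℕ) : ℕ := (scan k j m l).2.1

/-- the column on which `f_j` acts (leftmost unbracketed `+`), if any -/
noncomputable def fcol (k l j : ℕ) (m : ℕ → ℕ → ℕ) : Option ℕ := (scan k j m l).2.2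

open Classical in
/-- the Kashiwara operator `f_j` (`1 ≤ j ≤ n`): change the entry `j` to `j+1`
in the column given by the signature rule, undefined (`none`) if there is no
unbracketed `+`. -/
noncomputable def f (k l j : ℕ) (m : ℕ → ℕ → ℕ) : Option (ℕ → ℕ → ℕ) :=
  (fcol k l j m).map (fun c => fun i c' =>
    if c' = c ∧ m i c' = j then j + 1 else m i c')

/-- `p`-fold application of `f_j` (undefined if some step is undefined) -/
noncomputable def fpow (k l j : ℕ) : ℕ → (ℕ → ℕ → ℕ) → Option (ℕ → ℕ → ℕ)
  | 0, m => some m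
  | p + 1, m => (f k l j m).bind (fpow k l j p)

/-- the ground-state tableau `m_{i,i'} = i` -/
def m0 (k l : ℕ) : ℕ → ℕ → ℕ := fun i c =>
  if 1 ≤ i ∧ i ≤ k ∧ 1 ≤ c ∧ c ≤ l then i else 0

/-- the operator index used at step `a`: `i^{(a)} = k - g + r` with
`g = ⌊(a-1)/(n+1-k)⌋` and `r = (a-1) - (n+1-k)g`. -/
def op (n k a : ℕ) : ℕ := k - (a - 1) / (n + 1 - k) + (a - 1) % (n + 1 - k)

end ATab

namespace ATab

/-- the extremal tableaux: `b_0 = (m_{i,i'} = i)`,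
`b_a = f_{k-g+r}^{max} b_{a-1} = f_{k-g+r}^{φ_{k-g+r}(b_{a-1})} b_{a-1}` -/
noncomputable def bseq (n k l : ℕ) : ℕ → Option (ℕ → ℕ → ℕ)
  | 0 => some (m0 k l)
  | a + 1 => (bseq n k l a).bind
      (fun t => fpow k l (op n k (a + 1)) (phi k l (op n k (a + 1)) t) t)

/-- the tableau with `m_{i,i'} = i` for `i < k-g`, `m_{k-g,i'} = k-g+r+1`, and
`m_{i,i'} = i + n + 1 - k` for `i > k-g` -/
def target (n k l g r : ℕ) : ℕ → ℕ → ℕ := fun i c =>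
  if 1 ≤ i ∧ i ≤ k ∧ 1 ≤ c ∧ c ≤ l then
    (if i < k - g then i else if i = k - g then k - g + r + 1 else i + n + 1 - k)
  else 0

end ATab

namespace ATab

theorem scan_spec (k j l q : ℕ) (m : ℕ → ℕ → ℕ)
    (hp : ∀ c, 1 ≤ c → c ≤ q → colPlus k m c j)
    (hm : ∀ c, q < c → c ≤ l → colMinus k m c j) :
    ∀ c, c ≤ l → scan k j m c =
      if c ≤ q then (0, c, if c = 0 then (none : Option ℕ) else some c)
      else (c - q, q, if q = 0 then none else some q) := by
  intro c
  induction c with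
  | zero => intro _; simp [scan]
  | succ c ih =>
    intro hcl
    have ihc := ih (by omega)
    by_cases h1 : c + 1 ≤ q
    · have hpl := hp (c + 1) (by omega) h1
      have hmn : ¬ colMinus k m (c + 1) j := fun h => h.2 hpl.1
      rw [scan]
      simp only [ihc, if_pos (show c ≤ q by omega), if_neg hmn, if_pos hpl,
        if_pos (show c + 1 ≤ q from h1)]
      simp
    · have hmn := hm (c + 1) (by omega) hcl
      rw [scan]
      simp only [ihc, if_pos hmn, if_neg (show ¬ (c + 1 ≤ q) from h1)]
      by_cases h2 : c ≤ q
      · have hcq : c = q := by omega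
        subst hcq
        simp only [if_pos le_rfl]
        have : c + 1 - c = 1 := by omega
        rw [this]
      · simp only [if_neg h2]
        have : c + 1 - q = (c - q) + 1 := by omega
        rw [this]

end ATab
namespace ATab

set_option linter.unusedSectionVars false

section Bump

variable (k l j i0 : ℕ) (T : ℕ → ℕ → ℕ)

/-- the partially bumped tableau: entry `j` replaced by `j+1` in columns `> l - p` -/
def Tpart (p : ℕ) : ℕ → ℕ → ℕ :=
  fun i c => if l - p < c ∧ T i c = j then j + 1 else T i c

variable (hl : 1 ≤ l) (hi1 : 1 ≤ i0) (hik : i0 ≤ k)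
  (hT1 : ∀ c, 1 ≤ c → c ≤ l → T i0 c = j)
  (hT2 : ∀ i c, T i c = j → 1 ≤ c ∧ c ≤ l ∧ i = i0)
  (hT3 : ∀ i c, T i c ≠ j + 1)

include hT2 in
theorem Tpart_zero : Tpart l j T 0 = T := by
  funext i c
  simp only [Tpart]
  split_ifs with h
  · exact absurd (hT2 i c h.2).2.1 (by omega)
  · rfl

include hT2 in
theorem Tpart_last : Tpart l j T l = fun i c => if T i c = j then j + 1 else T i c := by
  funext i c
  simp only [Tpart]
  split_ifs with h1 h2 h3
  · rfl
  · exact absurd h1.2 h2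
  · exact absurd ⟨by have := hT2 i c h3; omega, h3⟩ h1
  · rfl

include hi1 hik hT1 hT3 in
theorem Tpart_plus (p c : ℕ) (hc1 : 1 ≤ c) (hc2 : c ≤ l - p) :
    colPlus k (Tpart l j T p) c j := by
  constructor
  · refine ⟨i0, Finset.mem_Icc.mpr ⟨hi1, hik⟩, ?_⟩
    simp only [Tpart]
    rw [if_neg (by rintro ⟨h, -⟩; omega)]
    exact hT1 c hc1 (by omega)
  · rintro ⟨i, hi, hv⟩
    simp only [Tpart] at hv
    split_ifs at hv with h
    · omega
    · exact hT3 i c hv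

include hi1 hik hT1 hT2 in
theorem Tpart_minus (p c : ℕ) (hc1 : l - p < c) (hc2 : c ≤ l) :
    colMinus k (Tpart l j T p) c j := by
  constructor
  · refine ⟨i0, Finset.mem_Icc.mpr ⟨hi1, hik⟩, ?_⟩
    simp only [Tpart]
    rw [if_pos ⟨hc1, hT1 c (by omega) hc2⟩]
  · rintro ⟨i, hi, hv⟩
    simp only [Tpart] at hv
    split_ifs at hv with h
    · omega
    · exact h ⟨by have := hT2 i c hv; omega, hv⟩

include hl hi1 hik hT1 hT2 hT3 in
theorem Tpart_scan (p : ℕ) : scan k j (Tpart l j T p) l =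
    if l ≤ l - p then (0, l, if l = 0 then (none : Option ℕ) else some l)
    else (l - (l - p), l - p, if l - p = 0 then none else some (l - p)) :=
  scan_spec k j l (l - p) (Tpart l j T p)
    (fun c h1 h2 => Tpart_plus k l j i0 T hi1 hik hT1 hT3 p c h1 h2)
    (fun c h1 h2 => Tpart_minus k l j i0 T hi1 hik hT1 hT2 p c h1 h2)
    l le_rfl

include hl hi1 hik hT1 hT2 hT3 in
theorem Tpart_phi (p : ℕ) : phi k l j (Tpart l j T p) = l - p := by
  unfold phi
  rw [Tpart_scan k l j i0 T hl hi1 hik hT1 hT2 hT3 p]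
  split_ifs <;> simp <;> omega

include hl hi1 hik hT1 hT2 hT3 in
theorem Tpart_fcol (p : ℕ) (hp : p < l) :
    fcol k l j (Tpart l j T p) = some (l - p) := by
  unfold fcol
  rw [Tpart_scan k l j i0 T hl hi1 hik hT1 hT2 hT3 p]
  split_ifs with h1 h2 h3
  · exfalso; omega
  · simp only [Option.some.injEq]; omega
  · exfalso; omega
  · rfl

include hl hi1 hik hT1 hT2 hT3 in
theorem Tpart_f (p : ℕ) (hp : p < l) :
    f k l j (Tpart l j T p) = some (Tpart l j T (p + 1)) := by
  unfold f
  rw [Tpart_fcol k l j i0 T hl hi1 hik hT1 hT2 hT3 p hp]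
  simp only [Option.map_some, Option.some.injEq]
  funext i c
  dsimp only [Tpart]
  by_cases hj : T i c = j
  · have hcl := hT2 i c hj
    rcases lt_trichotomy c (l - p) with h | h | h
    · simp only [if_neg (by omega : ¬ (l - p < c ∧ T i c = j)),
        if_neg (by rintro ⟨h', -⟩; omega : ¬ (c = l - p ∧ T i c = j)),
        if_neg (by rintro ⟨h', -⟩; omega : ¬ (l - (p + 1) < c ∧ T i c = j))]
    · simp only [if_neg (by omega : ¬ (l - p < c ∧ T i c = j)),
        if_pos (⟨h, hj⟩ : c = l - p ∧ T i c = j),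
        if_pos (⟨by omega, hj⟩ : l - (p + 1) < c ∧ T i c = j)]
    · simp only [if_pos (⟨h, hj⟩ : l - p < c ∧ T i c = j)]
      rw [if_neg (by rintro ⟨h', hv⟩; omega : ¬ (c = l - p ∧ (j + 1 : ℕ) = j)),
        if_pos (⟨by omega, hj⟩ : l - (p + 1) < c ∧ T i c = j)]
  · simp only [if_neg (by rintro ⟨-, h'⟩; exact hj h' : ¬ (l - p < c ∧ T i c = j)),
      if_neg (by rintro ⟨-, h'⟩; exact hj h' : ¬ (c = l - p ∧ T i c = j)),
      if_neg (by rintro ⟨-, h'⟩; exact hj h' : ¬ (l - (p + 1) < c ∧ T i c = j))]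

include hl hi1 hik hT1 hT2 hT3 in
theorem Tpart_fpow : ∀ p, p ≤ l →
    fpow k l j p (Tpart l j T (l - p)) = some (Tpart l j T l) := by
  intro p
  induction p with
  | zero => intro _; simp [fpow]
  | succ p ih =>
    intro hpl
    rw [fpow]
    rw [Tpart_f k l j i0 T hl hi1 hik hT1 hT2 hT3 (l - (p + 1)) (by omega)]
    rw [Option.bind_some, show l - (p + 1) + 1 = l - p from by omega]
    exact ih (by omega)

include hl hi1 hik hT1 hT2 hT3 in
theorem bump :
    fpow k l j (phi k l j T) T = some fun i c => if T i c = j then j + 1 else T i c := by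
  have h0 := Tpart_zero l j i0 T hT2
  have hphi : phi k l j T = l := by
    have := Tpart_phi k l j i0 T hl hi1 hik hT1 hT2 hT3 0
    rw [h0] at this; omega
  rw [hphi, ← Tpart_last l j i0 T hT2]
  have hfp := Tpart_fpow k l j i0 T hl hi1 hik hT1 hT2 hT3 l le_rfl
  rwa [Nat.sub_self, h0] at hfp

end Bump

end ATab
namespace ATab

theorem step0 (n k l : ℕ) (hk : 1 ≤ k) (hkn : k ≤ n) (hl : 1 ≤ l) :
    fpow k l k (phi k l k (m0 k l)) (m0 k l) = some (target n k l 0 0) := by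
  have h := bump k l k k (m0 k l) hl hk le_rfl ?_ ?_ ?_
  · rw [h]
    congr 1
    funext i c
    simp only [m0, target]
    split_ifs <;> omega
  · intro c h1 h2
    simp only [m0]
    rw [if_pos ⟨hk, le_rfl, h1, h2⟩]
  · intro i c h
    simp only [m0] at h
    split_ifs at h with h'
    · exact ⟨h'.2.2.1, h'.2.2.2, h⟩
    · omega
  · intro i c
    simp only [m0]
    split_ifs with h' <;> omega

theorem step1 (n k l g r : ℕ) (hkn : k ≤ n) (hl : 1 ≤ l)
    (hg : g + 1 ≤ k) (hr : r + 1 ≤ n - k) :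
    fpow k l (k - g + (r + 1)) (phi k l (k - g + (r + 1)) (target n k l g r))
      (target n k l g r) = some (target n k l g (r + 1)) := by
  have h := bump k l (k - g + (r + 1)) (k - g) (target n k l g r) hl (by omega) (by omega)
    ?_ ?_ ?_
  · rw [h]
    congr 1
    funext i c
    simp only [target]
    split_ifs <;> omega
  · intro c h1 h2
    simp only [target]
    rw [if_pos ⟨by omega, by omega, h1, h2⟩]
    split_ifs <;> omega
  · intro i c h
    simp only [target] at h
    split_ifs at h <;> omega
  · intro i c
    simp only [target]
    split_ifs <;> omega

theorem step2 (n k l g r : ℕ) (hkn : k ≤ n) (hl : 1 ≤ l)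
    (hg : g + 2 ≤ k) (hr : r + 1 = n + 1 - k) :
    fpow k l (k - (g + 1)) (phi k l (k - (g + 1)) (target n k l g r))
      (target n k l g r) = some (target n k l (g + 1) 0) := by
  have h := bump k l (k - (g + 1)) (k - (g + 1)) (target n k l g r) hl (by omega) (by omega)
    ?_ ?_ ?_
  · rw [h]
    congr 1
    funext i c
    simp only [target]
    split_ifs <;> omega
  · intro c h1 h2
    simp only [target]
    rw [if_pos ⟨by omega, by omega, h1, h2⟩]
    split_ifs <;> omega
  · intro i c h
    simp only [target] at h
    split_ifs at h <;> omega
  · intro i c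
    simp only [target]
    split_ifs <;> omega

end ATab
open ATab in
/-- in the `A_n^{(1)}` crystal `B(lΛ̄_k)`, the extremal element
`b_a` (with `g = ⌊(a-1)/(n+1-k)⌋`, `r = (a-1) - (n+1-k)g`, so
`b_a = f_{k-g+r}^{max} b_{a-1}` and `b_0` the tableau `m_{i,i'} = i`) is the
tableau with `m_{i,i'} = i` for `i < k-g`, `m_{k-g,i'} = k-g+r+1`, and
`m_{i,i'} = i+n+1-k` for `i > k-g`, in every column `i'`. -/
theorem An1_extremal_tableaux (n k l : ℕ) (hn : 2 ≤ n) (hk : 1 ≤ k)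
    (hkn : k ≤ n) (hl : 1 ≤ l) (a : ℕ) (ha : 1 ≤ a) (ha' : a ≤ k * (n + 1 - k)) :
    ATab.bseq n k l a =
      some (ATab.target n k l ((a - 1) / (n + 1 - k)) ((a - 1) % (n + 1 - k))) := by
  induction a with
  | zero => omega
  | succ a ih =>
    rcases Nat.eq_zero_or_pos a with h0 | hpos
    · subst h0
      have hidx : (0 + 1 - 1) / (n + 1 - k) = 0 ∧ (0 + 1 - 1) % (n + 1 - k) = 0 := by
        simp
      rw [hidx.1, hidx.2, show (0 : ℕ) + 1 = 0 + 1 from rfl, bseq, bseq, Option.bind_some]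
      have hop : op n k (0 + 1) = k := by simp [op]
      rw [hop]
      exact ATab.step0 n k l hk hkn hl
    · have hb := ih hpos (by omega)
      rw [bseq, hb, Option.bind_some]
      set d := n + 1 - k with hd
      set G := (a - 1) / d with hG
      set R := (a - 1) % d with hR
      have hd1 : 1 ≤ d := by omega
      have hdm : d * G + R = a - 1 := Nat.div_add_mod _ _
      have hRd : R < d := Nat.mod_lt _ (by omega)
      have hGk : G < k := by
        by_contra h
        push_neg at h
        have hkd : k * d ≤ d * G := by
          calc k * d = d * k := Nat.mul_comm k d
          _ ≤ d * G := Nat.mul_le_mul_left d h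
        omega
      have haeq : a = d * G + (R + 1) := by omega
      rw [show a + 1 - 1 = a by omega]
      by_cases hc : R + 1 < d
      · have hdiv : a / d = G := by
          rw [haeq, Nat.mul_add_div (by omega), Nat.div_eq_of_lt hc, Nat.add_zero]
        have hmod : a % d = R + 1 := by
          rw [haeq, Nat.mul_add_mod, Nat.mod_eq_of_lt hc]
        have hop : op n k (a + 1) = k - G + (R + 1) := by
          simp only [op]
          rw [show a + 1 - 1 = a by omega, ← hd, hdiv, hmod]
        rw [hop, hdiv, hmod]
        exact ATab.step1 n k l G R hkn hl (by omega) (by omega)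
      · have haeq2 : a = d * (G + 1) := by rw [Nat.mul_succ]; omega
        have hdiv : a / d = G + 1 := by
          rw [haeq2, Nat.mul_div_cancel_left _ (show 0 < d by omega)]
        have hmod : a % d = 0 := by rw [haeq2, Nat.mul_mod_right]
        have hGk2 : G + 2 ≤ k := by
          have h1 : d * (G + 1) < d * k := by
            rw [← haeq2, Nat.mul_comm d k]; omega
          have := Nat.lt_of_mul_lt_mul_left h1
          omega
        have hop : op n k (a + 1) = k - (G + 1) := by
          simp only [op]
          rw [show a + 1 - 1 = a by omega, ← hd, hdiv, hmod, Nat.add_zero]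
        rw [hop, hdiv, hmod]
        exact ATab.step2 n k l G R hkn hl hGk2 (by omega)
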